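/- For every integer t ≥ 2, the high-rate potential threshold of iterative hard-decision decoding with miscorrection satisfies ρ̂_t** − 1/(t−1)! ≤ ρ_t** ≤ ρ̂_t**. -/

import Mathlib

open Filter

/-- Poisson tail probability `φ(λ;k) = ∑_{i=k+1}^∞ (λ^i/i!)·e^{−λ}`. -/
noncomputable def phi (lam : ℝ) (k : ℕ) : ℝ :=
  ∑' i : ℕ, if k + 1 ≤ i then lam ^ i / (Nat.factorial i : ℝ) * Real.exp (-lam) else 0

/-- Potential function of the high-rate scaling limit of density evolution for
iterative hard-decision decoding without miscorrection:
`U(λ;ρ) = ∫_0^λ (z − ρ·φ(z;t−1)) dz`. -/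
noncomputable def U (t : ℕ) (lam ρ : ℝ) : ℝ :=
  ∫ z in (0 : ℝ)..lam, (z - ρ * phi z (t - 1))

/-- Potential function of the high-rate scaling limit of density evolution for
iterative hard-decision decoding with miscorrection:
`U_m(λ;ρ) = ∫_0^λ (z − ρ·φ(z;t−1) − (1/(t−1)!)·φ(z;t)) dz`. -/
noncomputable def Um (t : ℕ) (lam ρ : ℝ) : ℝ :=
  ∫ z in (0 : ℝ)..lam,
    (z - ρ * phi z (t - 1) - (1 / (Nat.factorial (t - 1) : ℝ)) * phi z t)

/-- High-rate potential threshold without miscorrection: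
`ρ̂_t** = sup{ρ ∈ [0,∞) : U(λ;ρ) ≥ 0 for all λ ≥ 0}`. -/
noncomputable def rhoHatStarStar (t : ℕ) : ℝ :=
  sSup {ρ : ℝ | 0 ≤ ρ ∧ ∀ lam : ℝ, 0 ≤ lam → 0 ≤ U t lam ρ}

/-- High-rate potential threshold with miscorrection:
`ρ_t** = sup{ρ ∈ [0,∞) : U_m(λ;ρ) ≥ 0 for all λ ≥ 0}`. -/
noncomputable def rhoStarStar (t : ℕ) : ℝ :=
  sSup {ρ : ℝ | 0 ≤ ρ ∧ ∀ lam : ℝ, 0 ≤ lam → 0 ≤ Um t lam ρ}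

lemma summable_f (z : ℝ) : Summable (fun i : ℕ => z ^ i / (Nat.factorial i : ℝ) * Real.exp (-z)) :=
  (Real.summable_pow_div_factorial z).mul_right _

lemma summable_phi (z : ℝ) (k : ℕ) :
    Summable (fun i : ℕ => if k + 1 ≤ i then z ^ i / (Nat.factorial i : ℝ) * Real.exp (-z) else 0) := by
  apply (summable_f z).summable_of_eq_zero_or_self
  intro i
  by_cases h : k + 1 ≤ i <;> simp [h]

lemma phi_eq (z : ℝ) (k : ℕ) :
    phi z k = 1 - Real.exp (-z) * ∑ i ∈ Finset.range (k + 1), z ^ i / (Nat.factorial i : ℝ) := by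
  have h1 : (∑' i : ℕ, z ^ i / (Nat.factorial i : ℝ) * Real.exp (-z)) = 1 := by
    rw [tsum_mul_right]
    have : ∑' n : ℕ, z ^ n / n.factorial = Real.exp z := by
      rw [Real.exp_eq_exp_ℝ, NormedSpace.exp_eq_tsum_div]
    rw [this, ← Real.exp_add]; simp
  have hsplit : ∀ i : ℕ, z ^ i / (Nat.factorial i : ℝ) * Real.exp (-z) =
      (if k + 1 ≤ i then z ^ i / (Nat.factorial i : ℝ) * Real.exp (-z) else 0)
      + (if k + 1 ≤ i then 0 else z ^ i / (Nat.factorial i : ℝ) * Real.exp (-z)) := by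
    intro i; by_cases h : k + 1 ≤ i <;> simp [h]
  have hs2 : Summable (fun i : ℕ => if k + 1 ≤ i then 0 else z ^ i / (Nat.factorial i : ℝ) * Real.exp (-z)) := by
    apply (summable_f z).summable_of_eq_zero_or_self
    intro i; by_cases h : k + 1 ≤ i <;> simp [h]
  have h2 : (∑' i : ℕ, (if k + 1 ≤ i then 0 else z ^ i / (Nat.factorial i : ℝ) * Real.exp (-z)))
      = Real.exp (-z) * ∑ i ∈ Finset.range (k + 1), z ^ i / (Nat.factorial i : ℝ) := by
    rw [tsum_eq_sum (s := Finset.range (k + 1)) (by intro i hi; simp at hi; simp [hi])]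
    rw [Finset.mul_sum]
    apply Finset.sum_congr rfl
    intro i hi
    simp only [Finset.mem_range] at hi
    rw [if_neg (by omega)]
    ring
  have hadd := Summable.tsum_add (summable_phi z k) hs2
  have hsum : (∑' i : ℕ, z ^ i / (Nat.factorial i : ℝ) * Real.exp (-z))
      = phi z k + (∑' i : ℕ, (if k + 1 ≤ i then 0 else z ^ i / (Nat.factorial i : ℝ) * Real.exp (-z))) := by
    rw [phi, ← hadd]
    exact tsum_congr hsplit
  rw [h1, h2] at hsum
  linarith

lemma phi_nonneg {z : ℝ} (hz : 0 ≤ z) (k : ℕ) : 0 ≤ phi z k := by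
  apply tsum_nonneg
  intro i
  by_cases h : k + 1 ≤ i <;> simp [h]
  positivity

lemma phi_le_z {z : ℝ} (hz : 0 ≤ z) (k : ℕ) : phi z k ≤ z := by
  rw [phi_eq]
  have h1 : (1 : ℝ) ≤ ∑ i ∈ Finset.range (k + 1), z ^ i / (Nat.factorial i : ℝ) := by
    have : ∀ i ∈ Finset.range (k + 1), (0:ℝ) ≤ z ^ i / (Nat.factorial i : ℝ) := by
      intro i _; positivity
    calc (1:ℝ) = z ^ 0 / (Nat.factorial 0 : ℝ) := by simp
      _ ≤ _ := Finset.single_le_sum this (by simp)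
  have h2 : 1 - z ≤ Real.exp (-z) := by
    have := Real.add_one_le_exp (-z); linarith
  have hexp : (0:ℝ) < Real.exp (-z) := Real.exp_pos _
  nlinarith

lemma phi_succ_le {z : ℝ} (hz : 0 ≤ z) (k : ℕ) : phi z (k + 1) ≤ phi z k := by
  rw [phi_eq, phi_eq]
  rw [Finset.sum_range_succ (n := k + 1)]
  have : (0:ℝ) ≤ Real.exp (-z) * (z ^ (k+1) / (Nat.factorial (k+1) : ℝ)) := by positivity
  nlinarith [Real.exp_pos (-z)]

lemma phi_ge_term {z : ℝ} (hz : 0 ≤ z) (k : ℕ) :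
    z ^ (k + 1) / (Nat.factorial (k + 1) : ℝ) * Real.exp (-z) ≤ phi z k := by
  have := Summable.le_tsum (summable_phi z k) (k + 1) (fun i _ => by
    by_cases h : k + 1 ≤ i <;> simp [h]
    positivity)
  simpa [phi] using this

lemma continuous_phi (k : ℕ) : Continuous (fun z => phi z k) := by
  have : (fun z => phi z k) = fun z =>
      1 - Real.exp (-z) * ∑ i ∈ Finset.range (k + 1), z ^ i / (Nat.factorial i : ℝ) := by
    funext z; exact phi_eq z k
  rw [this]
  fun_prop

/-- for every integer `t ≥ 2`,
`ρ̂_t** − 1/(t−1)! ≤ ρ_t** ≤ ρ̂_t**`. -/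
theorem stmt10 (t : ℕ) (ht : 2 ≤ t) :
    rhoHatStarStar t - 1 / (Nat.factorial (t - 1) : ℝ) ≤ rhoStarStar t ∧
      rhoStarStar t ≤ rhoHatStarStar t := by
  set c : ℝ := 1 / (Nat.factorial (t - 1) : ℝ) with hc
  have hcpos : 0 < c := by positivity
  have hcle1 : c ≤ 1 := by
    rw [hc]
    rw [div_le_one (by positivity)]
    exact_mod_cast Nat.one_le_iff_ne_zero.mpr (Nat.factorial_ne_zero _)
  have htt : t - 1 + 1 = t := by omega
  -- integrability helpers
  have hIntU : ∀ (ρ a b : ℝ), IntervalIntegrable (fun z => z - ρ * phi z (t-1)) MeasureTheory.volume a b := by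
    intro ρ a b
    have hcont : Continuous (fun z : ℝ => z - ρ * phi z (t-1)) :=
      continuous_id.sub (continuous_const.mul (continuous_phi (t-1)))
    exact hcont.intervalIntegrable a b
  have hIntUm : ∀ (ρ a b : ℝ), IntervalIntegrable
      (fun z => z - ρ * phi z (t-1) - c * phi z t) MeasureTheory.volume a b := by
    intro ρ a b
    have hcont : Continuous (fun z : ℝ => z - ρ * phi z (t-1) - c * phi z t) :=
      (continuous_id.sub (continuous_const.mul (continuous_phi (t-1)))).sub
        (continuous_const.mul (continuous_phi t))
    exact hcont.intervalIntegrable a b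
  -- Um ≤ U pointwise on integrals, for 0 ≤ ρ
  have hUmleU : ∀ ρ lam : ℝ, 0 ≤ lam → Um t lam ρ ≤ U t lam ρ := by
    intro ρ lam hlam
    rw [Um, U]
    apply intervalIntegral.integral_mono_on hlam (hIntUm ρ 0 lam) (hIntU ρ 0 lam)
    intro z hz
    have h0 : 0 ≤ phi z t := phi_nonneg hz.1 t
    nlinarith
  -- S sets
  set S1 := {ρ : ℝ | 0 ≤ ρ ∧ ∀ lam : ℝ, 0 ≤ lam → 0 ≤ U t lam ρ} with hS1
  set S2 := {ρ : ℝ | 0 ≤ ρ ∧ ∀ lam : ℝ, 0 ≤ lam → 0 ≤ Um t lam ρ} with hS2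
  have hsub : S2 ⊆ S1 := by
    rintro ρ ⟨hρ0, hρ⟩
    exact ⟨hρ0, fun lam hlam => le_trans (hρ lam hlam) (hUmleU ρ lam hlam)⟩
  have h0S1 : (0:ℝ) ∈ S1 := by
    refine ⟨le_refl 0, fun lam hlam => ?_⟩
    rw [U]
    apply intervalIntegral.integral_nonneg hlam
    intro z hz
    have := phi_nonneg hz.1 (t-1)
    nlinarith [hz.1]
  have h0S2 : (0:ℝ) ∈ S2 := by
    refine ⟨le_refl 0, fun lam hlam => ?_⟩
    rw [Um]
    apply intervalIntegral.integral_nonneg hlam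
    intro z hz
    have h1 := phi_le_z hz.1 t
    have h2 := phi_nonneg hz.1 t
    nlinarith [hz.1]
  -- boundedness of S1
  have hbdd1 : BddAbove S1 := by
    set K : ℝ := Real.exp (-2) / (Nat.factorial t : ℝ) * (2 ^ (t+1) / (t+1)) with hK
    have hKpos : 0 < K := by positivity
    refine ⟨2 / K, ?_⟩
    rintro ρ ⟨hρ0, hρ⟩
    have h2 := hρ 2 (by norm_num)
    -- U t 2 ρ ≤ 2 - ρ * K
    have hle : U t 2 ρ ≤ (∫ z in (0:ℝ)..2, (z - ρ * (Real.exp (-2) / (Nat.factorial t : ℝ) * z ^ t))) := by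
      rw [U]
      apply intervalIntegral.integral_mono_on (by norm_num) (hIntU ρ 0 2)
      · apply Continuous.intervalIntegrable; fun_prop
      · intro z hz
        have hterm : Real.exp (-2) / (Nat.factorial t : ℝ) * z ^ t ≤ phi z (t-1) := by
          have := phi_ge_term hz.1 (t-1)
          rw [htt] at this
          have hexp : Real.exp (-2) ≤ Real.exp (-z) := Real.exp_le_exp.mpr (by linarith [hz.2])
          have hzt : (0:ℝ) ≤ z ^ t := pow_nonneg hz.1 t
          calc Real.exp (-2) / (Nat.factorial t : ℝ) * z ^ t
              ≤ Real.exp (-z) / (Nat.factorial t : ℝ) * z ^ t := by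
                gcongr
            _ = z ^ t / (Nat.factorial t : ℝ) * Real.exp (-z) := by ring
            _ ≤ phi z (t-1) := this
        nlinarith
    have hval : (∫ z in (0:ℝ)..2, (z - ρ * (Real.exp (-2) / (Nat.factorial t : ℝ) * z ^ t)))
        = 2 - ρ * K := by
      rw [intervalIntegral.integral_sub (by apply Continuous.intervalIntegrable; fun_prop)
        (by apply Continuous.intervalIntegrable; fun_prop)]
      rw [intervalIntegral.integral_const_mul, intervalIntegral.integral_const_mul,
        integral_id, integral_pow]
      rw [hK, zero_pow (by omega : t + 1 ≠ 0)]
      ring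
    rw [hval] at hle
    have : ρ * K ≤ 2 := by linarith
    rw [div_eq_mul_inv]
    calc ρ = ρ * K * K⁻¹ := by field_simp
      _ ≤ 2 * K⁻¹ := by
        apply mul_le_mul_of_nonneg_right this
        positivity
  have hbdd2 : BddAbove S2 := hbdd1.mono hsub
  constructor
  · -- lower bound
    rw [rhoHatStarStar, rhoStarStar, ← hS1, ← hS2]
    rw [sub_le_iff_le_add]
    apply csSup_le ⟨0, h0S1⟩
    intro ρ hρ
    obtain ⟨hρ0, hρU⟩ := hρ
    by_cases hcase : ρ ≤ c
    · have : (0:ℝ) ≤ sSup S2 := le_csSup hbdd2 h0S2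
      linarith
    · push_neg at hcase
      have hmem : ρ - c ∈ S2 := by
        refine ⟨by linarith, fun lam hlam => ?_⟩
        have hge : U t lam ρ ≤ Um t lam (ρ - c) := by
          rw [Um, U]
          apply intervalIntegral.integral_mono_on hlam (hIntU ρ 0 lam) (hIntUm (ρ-c) 0 lam)
          intro z hz
          have h1 : phi z t ≤ phi z (t-1) := by
            have := phi_succ_le hz.1 (t-1); rwa [htt] at this
          have h2 : 0 ≤ phi z t := phi_nonneg hz.1 t
          nlinarith
        linarith [hρU lam hlam]
      linarith [le_csSup hbdd2 hmem]
  · rw [rhoHatStarStar, rhoStarStar, ← hS1, ← hS2]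
    exact csSup_le_csSup hbdd1 ⟨0, h0S2⟩ hsub
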